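/- Let p ≡ 3 (mod 4) be a prime and let M be a positive semidefinite symmetric integer matrix of rank 2 with all diagonal entries equal to p. Then M is switching equivalent to a matrix having at most two distinct rows. -/

import Mathlib

/-- A signed permutation matrix built from a sign function `d` and a permutation `σ`. -/
def signedPermZ {n : ℕ} (d : Fin n → ℤ) (σ : Equiv.Perm (Fin n)) : Matrix (Fin n) (Fin n) ℤ :=
  Matrix.of fun i j => if j = σ i then d i else 0

private lemma det3_zero {n : ℕ} (A : Matrix (Fin n) (Fin n) ℝ) (hA : A.rank = 2)
    (e : Fin 3 → Fin n) : (A.submatrix e e).det = 0 := by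
  by_contra h
  have h1 : (A.submatrix e e).rank = 3 := by
    rw [Matrix.rank_of_isUnit _ ((Matrix.isUnit_iff_isUnit_det _).2 (isUnit_iff_ne_zero.mpr h))]
    simp
  have key : A.submatrix e e =
      (Matrix.of fun a b => if e a = b then (1:ℝ) else 0) * A *
      (Matrix.of fun a b => if a = e b then (1:ℝ) else 0) := by
    ext i j
    simp [Matrix.mul_apply, ite_mul, mul_ite, Finset.sum_ite_eq, Finset.sum_ite_eq']
  have h2 : (A.submatrix e e).rank ≤ A.rank := by
    rw [key]
    exact le_trans (Matrix.rank_mul_le_left _ _) (Matrix.rank_mul_le_right _ _)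
  omega

private lemma conj_apply {n : ℕ} (M : Matrix (Fin n) (Fin n) ℤ) (d : Fin n → ℤ) (i j : Fin n) :
    ((signedPermZ d 1).transpose * M * signedPermZ d 1) i j = d i * M i j * d j := by
  have h1 : signedPermZ d 1 = Matrix.of fun i j => if j = i then d i else 0 := rfl
  rw [h1]
  simp [ Matrix.mul_apply, ite_mul, mul_ite, Finset.sum_ite_eq, Finset.sum_ite_eq']

private lemma sq_add_sq_aux (p : ℕ) (hp : p.Prime) (hp4 : p % 4 = 3) (b c : ℤ)
    (hbc : b ^ 2 + c ^ 2 = (p : ℤ) ^ 2) : b = 0 ∨ c = 0 := by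
  haveI : Fact p.Prime := ⟨hp⟩
  by_contra h
  push_neg at h
  obtain ⟨hb, hc⟩ := h
  have hpb : (p : ℤ) ∣ b := by
    by_contra hpb
    have hbu : (b : ZMod p) ≠ 0 := by
      simpa [ZMod.intCast_zmod_eq_zero_iff_dvd] using hpb
    have h0 : (b : ZMod p) ^ 2 + (c : ZMod p) ^ 2 = 0 := by
      have := congrArg (Int.cast : ℤ → ZMod p) hbc
      push_cast at this
      simpa [ZMod.natCast_self] using this
    have hsq : ((c : ZMod p) * (b : ZMod p)⁻¹) ^ 2 = -1 := by
      have hb2 : (b : ZMod p) ^ 2 ≠ 0 := pow_ne_zero _ hbu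
      field_simp
      linear_combination h0
    have : IsSquare (-1 : ZMod p) := ⟨(c : ZMod p) * (b : ZMod p)⁻¹, by rw [← sq]; exact hsq.symm⟩
    exact (ZMod.exists_sq_eq_neg_one_iff.mp this) hp4
  obtain ⟨k, rfl⟩ := hpb
  have hk : k ≠ 0 := by rintro rfl; simp at hb
  have hp0 : (0 : ℤ) < p := by exact_mod_cast hp.pos
  have h1 : 1 ≤ k ^ 2 := by rcases hk.lt_or_gt with h | h <;> nlinarith
  have hc2 : (0 : ℤ) < c ^ 2 := by positivity
  nlinarith

private lemma int_zero_of (p a : ℤ) (hp : 0 < p) (hd : p ∣ a) (h2 : a ^ 2 ≤ p ^ 2)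
    (h3 : a ≠ p) (h4 : a ≠ -p) : a = 0 := by
  obtain ⟨k, rfl⟩ := hd
  by_contra hk0
  have hk : k ≠ 0 := by rintro rfl; simp at hk0
  have h1 : 1 ≤ k ^ 2 := by rcases hk.lt_or_gt with h | h <;> nlinarith
  have he : (k - 1) * (k + 1) = 0 := by nlinarith
  rcases mul_eq_zero.mp he with h | h
  · have : k = 1 := by linarith
    exact h3 (by rw [this, mul_one])
  · have : k = -1 := by linarith
    exact h4 (by rw [this]; ring)

private lemma key_lemma (p : ℕ) (hp : p.Prime) (hp4 : p % 4 = 3) (a b c : ℤ)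
    (hdet : (p : ℤ) ^ 3 + 2 * (a * (b * c)) - p * a ^ 2 - p * b ^ 2 - p * c ^ 2 = 0)
    (ha : a ^ 2 ≤ (p : ℤ) ^ 2) (hb : b ^ 2 ≤ (p : ℤ) ^ 2) (hc : c ^ 2 ≤ (p : ℤ) ^ 2)
    (hna : a ≠ p) (hna' : a ≠ -p) (hnb : b ≠ p) (hnb' : b ≠ -p)
    (hnc : c ≠ p) (hnc' : c ≠ -p) : False := by
  have hpZ : Prime (p : ℤ) := Nat.prime_iff_prime_int.mp hp
  have hp0 : (0 : ℤ) < p := by exact_mod_cast hp.pos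
  have hnd2 : ¬ ((p : ℤ) ∣ 2) := by
    intro hdvd
    have : p ∣ 2 := by exact_mod_cast hdvd
    have := Nat.le_of_dvd (by norm_num) this
    omega
  have hdvd : (p : ℤ) ∣ 2 * (a * (b * c)) := ⟨a ^ 2 + b ^ 2 + c ^ 2 - p ^ 2, by linarith⟩
  have habc : (p : ℤ) ∣ a * (b * c) := (hpZ.dvd_mul.mp hdvd).resolve_left hnd2
  have main : ∀ x y z : ℤ,
      (p : ℤ) ^ 3 + 2 * (x * (y * z)) - p * x ^ 2 - p * y ^ 2 - p * z ^ 2 = 0 →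
      x ^ 2 ≤ (p : ℤ) ^ 2 → (p : ℤ) ∣ x → x ≠ p → x ≠ -p →
      y ≠ p → y ≠ -p → z ≠ p → z ≠ -p → False := by
    intro x y z hd hx hdx hx1 hx2 hy1 hy2 hz1 hz2
    have hx0 : x = 0 := int_zero_of _ _ hp0 hdx hx hx1 hx2
    subst hx0
    have hyz : y ^ 2 + z ^ 2 = (p : ℤ) ^ 2 := by
      have h' : (p : ℤ) * (y ^ 2 + z ^ 2) = p * p ^ 2 := by linarith [hd]
      have := mul_left_cancel₀ (ne_of_gt hp0) h'
      linarith
    rcases sq_add_sq_aux p hp hp4 y z hyz with h | h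
    · subst h
      have h1 : z ^ 2 = (p : ℤ) ^ 2 := by linarith
      have h2 : (z - p) * (z + p) = 0 := by nlinarith
      rcases mul_eq_zero.mp h2 with h | h
      · exact hz1 (by linarith)
      · exact hz2 (by linarith)
    · subst h
      have h1 : y ^ 2 = (p : ℤ) ^ 2 := by linarith
      have h2 : (y - p) * (y + p) = 0 := by nlinarith
      rcases mul_eq_zero.mp h2 with h | h
      · exact hy1 (by linarith)
      · exact hy2 (by linarith)
  rcases hpZ.dvd_mul.mp habc with h | h
  · exact main a b c hdet ha h hna hna' hnb hnb' hnc hnc'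
  rcases hpZ.dvd_mul.mp h with h | h
  · exact main b a c (by linarith [hdet]) hb h hnb hnb' hna hna' hnc hnc'
  · exact main c a b (by linarith [hdet]) hc h hnc hnc' hna hna' hnb hnb'

theorem rank_two_prime_diag {n : ℕ} (p : ℕ) (hp : p.Prime) (hp4 : p % 4 = 3)
    (M : Matrix (Fin n) (Fin n) ℤ) (hsymm : M.IsSymm)
    (hpsd : (M.map (Int.cast : ℤ → ℝ)).PosSemidef)
    (hdiag : ∀ i, M i i = (p : ℤ))
    (hrank : (M.map (Int.cast : ℤ → ℝ)).rank = 2) :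
    ∃ (d : Fin n → ℤ) (σ : Equiv.Perm (Fin n)), (∀ i, d i = 1 ∨ d i = -1) ∧
      ∃ r₁ r₂ : Fin n → ℤ,
        ∀ i, (Matrix.transpose (signedPermZ d σ) * M * signedPermZ d σ) i = r₁ ∨
             (Matrix.transpose (signedPermZ d σ) * M * signedPermZ d σ) i = r₂ := by
  have hsym' : ∀ i j, M j i = M i j := fun i j => congrFun (congrFun hsymm i) j
  have hp0R : (0 : ℝ) < p := by exact_mod_cast hp.pos
  have hp0Z : (0 : ℤ) < p := by exact_mod_cast hp.pos
  have hbd : ∀ i j, (M i j) ^ 2 ≤ (p : ℤ) ^ 2 := by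
    intro i j
    have h := (hpsd.submatrix ![i, j]).dotProduct_mulVec_nonneg ![((M i j : ℤ) : ℝ), -((p : ℕ) : ℝ)]
    simp only [dotProduct, Matrix.mulVec, Fin.sum_univ_two, Matrix.submatrix_apply,
      Matrix.map_apply, Matrix.cons_val_zero, Matrix.cons_val_one, Matrix.head_cons,
      star_trivial, Pi.star_apply] at h
    rw [hsym' i j, hdiag i, hdiag j] at h
    push_cast at h
    have hr : ((M i j : ℤ) : ℝ) ^ 2 ≤ ((p : ℕ) : ℝ) ^ 2 := by nlinarith [h, hp0R]
    exact_mod_cast hr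
  have hdet3 : ∀ i j k, (p : ℤ) ^ 3 + 2 * (M i j * (M i k * M j k))
      - p * (M i j) ^ 2 - p * (M i k) ^ 2 - p * (M j k) ^ 2 = 0 := by
    intro i j k
    have h := det3_zero (M.map (Int.cast : ℤ → ℝ)) hrank ![i, j, k]
    rw [Matrix.det_fin_three] at h
    simp only [Matrix.submatrix_apply, Matrix.map_apply, Matrix.cons_val_zero,
      Matrix.cons_val_one, Matrix.head_cons, Matrix.cons_val_two, Matrix.tail_cons] at h
    rw [hsym' i j, hsym' i k, hsym' j k, hdiag i, hdiag j, hdiag k] at h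
    have h' : (((p : ℤ) ^ 3 + 2 * (M i j * (M i k * M j k))
        - p * (M i j) ^ 2 - p * (M i k) ^ 2 - p * (M j k) ^ 2 : ℤ) : ℝ) = 0 := by
      push_cast
      linear_combination h
    exact_mod_cast h'
  have hrow : ∀ i j, M i j = p → ∀ k, M i k = M j k := by
    intro i j hij k
    have h := hdet3 i j k
    rw [hij] at h
    have h2 : (p : ℤ) * (M i k - M j k) ^ 2 = 0 := by linear_combination -h
    have h3 := (mul_eq_zero.mp h2).resolve_left (ne_of_gt hp0Z)
    have h4 : M i k - M j k = 0 := by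
      exact pow_eq_zero_iff (by norm_num : (2:ℕ) ≠ 0) |>.mp h3
    linarith
  have hrow' : ∀ i j, M i j = -p → ∀ k, M i k = -M j k := by
    intro i j hij k
    have h := hdet3 i j k
    rw [hij] at h
    have h2 : (p : ℤ) * (M i k + M j k) ^ 2 = 0 := by linear_combination -h
    have h3 := (mul_eq_zero.mp h2).resolve_left (ne_of_gt hp0Z)
    have h4 : M i k + M j k = 0 := by
      exact pow_eq_zero_iff (by norm_num : (2:ℕ) ≠ 0) |>.mp h3
    linarith
  rcases Nat.eq_zero_or_pos n with hn | hn
  · subst hn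
    exact ⟨fun _ => 1, 1, fun i => i.elim0, fun _ => 0, fun _ => 0, fun i => i.elim0⟩
  · set i₀ : Fin n := ⟨0, hn⟩ with hi₀
    obtain ⟨j₀, hclass⟩ : ∃ j₀, ∀ i,
        (M i₀ i = p ∨ M i₀ i = -p) ∨ (M j₀ i = p ∨ M j₀ i = -p) := by
      by_cases hex : ∀ i, M i₀ i = p ∨ M i₀ i = -p
      · exact ⟨i₀, fun i => Or.inl (hex i)⟩
      · push_neg at hex
        obtain ⟨j₀, hj₁, hj₂⟩ := hex
        refine ⟨j₀, fun i => ?_⟩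
        by_contra hcon
        push_neg at hcon
        obtain ⟨⟨h1, h2⟩, h3, h4⟩ := hcon
        exact key_lemma p hp hp4 (M i₀ j₀) (M i₀ i) (M j₀ i) (hdet3 i₀ j₀ i)
          (hbd _ _) (hbd _ _) (hbd _ _) hj₁ hj₂ h1 h2 h3 h4
    have hne1 : ¬(-(p:ℤ) = (p:ℤ)) := by omega
    set d : Fin n → ℤ := fun i =>
      if M i₀ i = p then 1 else if M i₀ i = -p then -1 else
        if M j₀ i = p then 1 else -1 with hd
    refine ⟨d, 1, fun i => by simp only [hd]; split_ifs <;> norm_num,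
      fun j => d j * M i₀ j, fun j => d j * M j₀ j, fun i => ?_⟩
    have hNij : ∀ j, ((signedPermZ d 1).transpose * M * signedPermZ d 1) i j
        = d i * M i j * d j := conj_apply M d i
    by_cases h1 : M i₀ i = p
    · left; funext j; rw [hNij j]
      have hdi : d i = 1 := by simp [hd, h1]
      rw [hdi, hrow i₀ i h1 j]; ring
    · by_cases h2 : M i₀ i = -p
      · left; funext j; rw [hNij j]
        have hdi : d i = -1 := by simp [hd, h1, h2, hne1]
        rw [hdi, hrow' i₀ i h2 j]; ring
      · have h34 := (hclass i).resolve_left (by tauto)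
        by_cases h3 : M j₀ i = p
        · right; funext j; rw [hNij j]
          have hdi : d i = 1 := by simp [hd, h1, h2, h3]
          rw [hdi, hrow j₀ i h3 j]; ring
        · have h4 : M j₀ i = -p := h34.resolve_left h3
          right; funext j; rw [hNij j]
          have hdi : d i = -1 := by simp [hd, h1, h2, h3]
          rw [hdi, hrow' j₀ i h4 j]; ring
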